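/- arXiv:1504.03924 — 2 statements merged into one kernel-verified Lean document; each statement's English description precedes it below -/
import Mathlib

section
/- Let M be a finite-dimensional module over the VW-algebra ⩔_d(Ξ) with generalized eigenspace decomposition M = ⊕ M_𝐢 for y₁,…,y_d, and set ψ_k = s_k(y_k - y_{k+1}) + 1. If 𝐢_k + 𝐢_{k+1} ≠ 0 then ψ_k M_𝐢 ⊆ M_{s_k 𝐢}, where s_k 𝐢 swaps entries k and k+1 of 𝐢. If moreover |𝐢_k - 𝐢_{k+1}| ≠ 1, then ψ_k restricts to a linear isomorphism M_𝐢 ≅ M_{s_k(𝐢)}. -/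
/-- The simultaneous generalized eigenspace `M_𝐢` for the commuting operators
`y 0, …, y (d-1)` with eigenvalue tuple `c`. -/
def simGenEigenspace {M : Type*} [AddCommGroup M] [Module ℂ M]
    (d : ℕ) (y : ℕ → Module.End ℂ M) (c : ℕ → ℂ) : Submodule ℂ M :=
  ⨅ j : Fin d, (y j).maxGenEigenspace (c j)



open Module

section Aux
variable {M : Type*} [AddCommGroup M] [Module ℂ M]

lemma aux_pow_smul (T : Module.End ℂ M) (c : ℂ) (m : M)
    (h : T m = c • m) : ∀ j : ℕ, (T ^ j) m = c ^ j • m := by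
  intro j
  induction j with
  | zero => simp
  | succ n ih =>
      rw [pow_succ, Module.End.mul_apply, h, map_smul, ih, smul_smul, ← pow_succ']

lemma aux_inj (T : Module.End ℂ M) (c : ℂ) (hc : c ≠ 0) (N : ℕ) (m : M)
    (hN : (T ^ N) m = 0) (h : (c • (1 : Module.End ℂ M) + T) m = 0) : m = 0 := by
  have h' : c • m + T m = 0 := by simpa using h
  have hTm : T m = (-c) • m := by
    rw [neg_smul, eq_neg_iff_add_eq_zero, add_comm]; exact h'
  have := aux_pow_smul T (-c) m hTm N
  rw [hN] at this
  have hne : (-c) ^ N ≠ 0 := pow_ne_zero _ (neg_ne_zero.mpr hc)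
  exact (smul_eq_zero.mp this.symm).resolve_left hne

lemma aux_solve (p : Submodule ℂ M) (T : Module.End ℂ M)
    (hT : ∀ x ∈ p, T x ∈ p) (c : ℂ) (hc : c ≠ 0) :
    ∀ N : ℕ, ∀ m ∈ p, (T ^ N) m = 0 → ∃ u ∈ p, (c • (1 : Module.End ℂ M) + T) u = m := by
  intro N
  induction N with
  | zero =>
      intro m hm h0
      simp only [pow_zero, Module.End.one_apply] at h0
      exact ⟨0, p.zero_mem, by simp [h0]⟩
  | succ N ih =>
      intro m hm hN
      obtain ⟨u', hu'p, hu'⟩ := ih (T m) (hT m hm) (by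
        rw [← Module.End.mul_apply, ← pow_succ]; exact hN)
      refine ⟨c⁻¹ • (m - u'), p.smul_mem _ (p.sub_mem hm hu'p), ?_⟩
      have expand : ∀ x : M, (c • (1 : Module.End ℂ M) + T) x = c • x + T x := by
        intro x; simp
      rw [expand] at hu' ⊢
      have h2 : T m - T u' = c • u' := by rw [← hu']; abel
      calc c • (c⁻¹ • (m - u')) + T (c⁻¹ • (m - u'))
          = c • (c⁻¹ • (m - u')) + c⁻¹ • (T m - T u') := by rw [map_smul, map_sub]
        _ = (m - u') + c⁻¹ • (c • u') := by
            rw [h2, smul_smul, mul_inv_cancel₀ hc, one_smul]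
        _ = m := by rw [smul_smul, inv_mul_cancel₀ hc, one_smul]; abel

lemma aux_nilsum (U V : Module.End ℂ M) (h : Commute U V) (n1 n2 : ℕ) (m : M)
    (h1 : (U ^ n1) m = 0) (h2 : (V ^ n2) m = 0) : ((U + V) ^ (n1 + n2)) m = 0 := by
  rw [h.add_pow]
  rw [LinearMap.coe_sum, Finset.sum_apply]
  refine Finset.sum_eq_zero fun i hi => ?_
  by_cases hin : n1 ≤ i
  · have hcomm : U ^ i * V ^ (n1 + n2 - i) = V ^ (n1 + n2 - i) * U ^ i :=
      ((h.pow_pow i (n1 + n2 - i))).eq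
    have hUi : (U ^ i) m = 0 := by
      have : U ^ i = U ^ (i - n1) * U ^ n1 := by
        rw [← pow_add, Nat.sub_add_cancel hin]
      rw [this, Module.End.mul_apply, h1, map_zero]
    have e1 : U ^ i * V ^ (n1 + n2 - i) = V ^ (n1 + n2 - i) * U ^ i := (h.pow_pow _ _).eq
    rw [e1, mul_assoc, Module.End.mul_apply]
    have hz : (U ^ i * ((n1 + n2).choose i : Module.End ℂ M)) m = 0 := by
      rw [Module.End.mul_apply, Module.End.natCast_apply, map_nsmul, hUi, smul_zero]
    rw [hz, map_zero]
  · push_neg at hin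
    have hn2 : n2 ≤ n1 + n2 - i := by omega
    have hVi : (V ^ (n1 + n2 - i)) m = 0 := by
      have : V ^ (n1 + n2 - i) = V ^ (n1 + n2 - i - n2) * V ^ n2 := by
        rw [← pow_add, Nat.sub_add_cancel hn2]
      rw [this, Module.End.mul_apply, h2, map_zero]
    have hz : (V ^ (n1 + n2 - i) * ((n1 + n2).choose i : Module.End ℂ M)) m = 0 := by
      rw [Module.End.mul_apply, Module.End.natCast_apply, map_nsmul, hVi, smul_zero]
    rw [mul_assoc, Module.End.mul_apply, hz, map_zero]

end Aux

section Aux2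
variable {M : Type*} [AddCommGroup M] [Module ℂ M]

lemma aux_intw (p : Submodule ℂ M) (ψ A B : Module.End ℂ M) (a : ℂ)
    (hB : ∀ x ∈ p, B x ∈ p) (hrel : ∀ x ∈ p, A (ψ x) = ψ (B x)) :
    ∀ n : ℕ, ∀ x ∈ p, ((A - a • 1) ^ n) (ψ x) = ψ (((B - a • 1) ^ n) x) := by
  intro n
  induction n with
  | zero => intro x hx; simp
  | succ n ih =>
      intro x hx
      have hx' : (B - a • 1) x ∈ p := by
        have hh : (B - a • (1 : Module.End ℂ M)) x = B x - a • x := by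
          simp
        rw [hh]; exact p.sub_mem (hB x hx) (p.smul_mem a hx)
      have h1 : (A - a • (1 : Module.End ℂ M)) (ψ x) = ψ ((B - a • 1) x) := by
        simp only [LinearMap.sub_apply, LinearMap.smul_apply, Module.End.one_apply]
        rw [hrel x hx, ← map_smul, ← map_sub]
      rw [pow_succ, Module.End.mul_apply, h1, ih _ hx', pow_succ, Module.End.mul_apply]

lemma aux_central (c : ℂ) (X : Module.End ℂ M) : Commute (c • (1 : Module.End ℂ M)) X :=
  (Commute.one_left X).smul_left c

lemma aux_factor (c : ℂ) (X : Module.End ℂ M) :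
    c ^ 2 • (1 : Module.End ℂ M) - X * X = (c • 1 + X) * (c • 1 - X) := by
  simp only [mul_sub, add_mul, smul_mul_assoc, mul_smul_comm, one_mul, mul_one, smul_smul]
  rw [pow_two]
  module

end Aux2


/-- Let `M` be a finite-dimensional module over the VW-algebra
with generalized eigenspace decomposition `M = ⊕ M_𝐢` for `y 1, …, y d`, and set
`ψ k = s k (y k - y (k+1)) + 1`.  If `𝐢 k + 𝐢 (k+1) ≠ 0` then
`ψ k M_𝐢 ⊆ M_{s_k 𝐢}` where `s_k 𝐢` swaps entries `k` and `k+1` of `𝐢`.  If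
moreover `(𝐢 k - 𝐢 (k+1))² ≠ 1` (i.e. `|𝐢_k - 𝐢_{k+1}| ≠ 1`), then `ψ k`
restricts to a linear isomorphism `M_𝐢 ≅ M_{s_k 𝐢}`. -/

theorem statement4 (M : Type*) [AddCommGroup M] [Module ℂ M] [FiniteDimensional ℂ M]
    (d : ℕ) (y e s : ℕ → Module.End ℂ M)
    (hcomm : ∀ j j', j < d → j' < d → Commute (y j) (y j'))
    (hs2 : ∀ k, k + 1 < d → s k * s k = 1)
    (hsy : ∀ k j, k + 1 < d → j < d → j ≠ k → j ≠ k + 1 → s k * y j = y j * s k)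
    (hvw7 : ∀ k, k + 1 < d → s k * y k - y (k+1) * s k = e k - 1)
    (hvw7' : ∀ k, k + 1 < d → y k * s k - s k * y (k+1) = e k - 1)
    (hrel1 : ∀ k, k + 1 < d → e k * (y k + y (k+1)) = 0)
    (hrel2 : ∀ k, k + 1 < d → (y k + y (k+1)) * e k = 0)
    (hdecomp : (⨆ c : ℕ → ℂ, simGenEigenspace d y c) = ⊤)
    (ev : ℕ → ℂ) (k : ℕ) (hk : k + 1 < d)
    (hsum : ev k + ev (k+1) ≠ 0) :
    Submodule.map (s k * (y k - y (k+1)) + 1) (simGenEigenspace d y ev) ≤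
      simGenEigenspace d y
        (fun j => if j = k then ev (k+1) else if j = k + 1 then ev k else ev j) ∧
    ((ev k - ev (k+1)) ^ 2 ≠ 1 →
      Submodule.map (s k * (y k - y (k+1)) + 1) (simGenEigenspace d y ev) =
        simGenEigenspace d y
          (fun j => if j = k then ev (k+1) else if j = k + 1 then ev k else ev j) ∧
      ∀ m ∈ simGenEigenspace d y ev,
        (s k * (y k - y (k+1)) + 1) m = 0 → m = 0) := by
  have hkd : k < d := by omega
  have hk1d : k + 1 < d := hk
  set Δ : Module.End ℂ M := y k - y (k+1) with hΔdef
  set ψ : Module.End ℂ M := s k * (y k - y (k+1)) + 1 with hψdef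
  set ev' : ℕ → ℂ := fun j => if j = k then ev (k+1) else if j = k + 1 then ev k else ev j
    with hev'def
  have hcy : y k * y (k+1) = y (k+1) * y k := (hcomm k (k+1) hkd hk1d).eq
  -- membership characterization
  have hmem : ∀ (c : ℕ → ℂ) (x : M), x ∈ simGenEigenspace d y c ↔
      ∀ j : Fin d, ∃ n : ℕ, ((y j - c j • 1) ^ n) x = 0 := by
    intro c x
    simp [simGenEigenspace, Submodule.mem_iInf, Module.End.mem_maxGenEigenspace]
  -- invariance under the y's
  have hyinv : ∀ (c : ℕ → ℂ) (j : ℕ), j < d →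
      ∀ x ∈ simGenEigenspace d y c, y j x ∈ simGenEigenspace d y c := by
    intro c j hj x hx
    rw [simGenEigenspace, Submodule.mem_iInf] at hx ⊢
    intro j'
    exact Module.End.mapsTo_maxGenEigenspace_of_comm (hcomm _ _ j'.2 hj) _ (hx j')
  have hΔinv : ∀ (c : ℕ → ℂ), ∀ x ∈ simGenEigenspace d y c,
      Δ x ∈ simGenEigenspace d y c := by
    intro c x hx
    have : Δ x = y k x - y (k+1) x := by simp [hΔdef]
    rw [this]
    exact Submodule.sub_mem _ (hyinv c k hkd x hx) (hyinv c (k+1) hk1d x hx)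
  -- e_k vanishes on eigenspaces with nonzero sum
  have hE0 : ∀ (c : ℕ → ℂ), c k + c (k+1) ≠ 0 →
      ∀ x ∈ simGenEigenspace d y c, e k x = 0 := by
    intro c hc x hx
    obtain ⟨n1, hn1⟩ := (hmem c x).mp hx ⟨k, hkd⟩
    obtain ⟨n2, hn2⟩ := (hmem c x).mp hx ⟨k+1, hk1d⟩
    set U : Module.End ℂ M := y k - c k • 1 with hU
    set V : Module.End ℂ M := y (k+1) - c (k+1) • 1 with hV
    have hcUV : Commute U V := by
      have h1 : Commute (y k) V :=
        (hcomm k (k+1) hkd hk1d).sub_right ((Commute.one_right (y k)).smul_right _)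
      exact h1.sub_left ((Commute.one_left V).smul_left _)
    have hTN : ((U + V) ^ (n1 + n2)) x = 0 := aux_nilsum U V hcUV n1 n2 x hn1 hn2
    have hTinv : ∀ z ∈ simGenEigenspace d y c, (U + V) z ∈ simGenEigenspace d y c := by
      intro z hz
      have : (U + V) z = (y k z - c k • z) + (y (k+1) z - c (k+1) • z) := by
        simp [hU, hV]
      rw [this]
      exact Submodule.add_mem _
        (Submodule.sub_mem _ (hyinv c k hkd z hz) (Submodule.smul_mem _ _ hz))
        (Submodule.sub_mem _ (hyinv c (k+1) hk1d z hz) (Submodule.smul_mem _ _ hz))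
    obtain ⟨u, hu, huu⟩ :=
      aux_solve _ (U + V) hTinv (c k + c (k+1)) hc (n1 + n2) x hx hTN
    have hyy : ((c k + c (k+1)) • (1 : Module.End ℂ M) + (U + V)) = y k + y (k+1) := by
      rw [hU, hV, add_smul]
      abel
    rw [hyy] at huu
    calc e k x = e k ((y k + y (k+1)) u) := by rw [huu]
      _ = (e k * (y k + y (k+1))) u := (Module.End.mul_apply _ _ _).symm
      _ = 0 := by rw [hrel1 k hk]; rfl
  -- operator identities
  have hψA : y k * ψ = ψ * y (k+1) + e k * Δ := by
    rw [hψdef, hΔdef]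
    linear_combination (norm := noncomm_ring)
      (hvw7' k hk) * (y k - y (k+1)) - s k * hcy
  have hψB : y (k+1) * ψ = ψ * y k - e k * Δ := by
    rw [hψdef, hΔdef]
    linear_combination (norm := noncomm_ring)
      - (hvw7 k hk) * (y k - y (k+1)) - s k * hcy
  have hψj : ∀ j, j < d → j ≠ k → j ≠ k + 1 → y j * ψ = ψ * y j := by
    intro j hj h1 h2
    have hsj := hsy k j hk hj h1 h2
    have hc1 := (hcomm j k hj hkd).eq
    have hc2 := (hcomm j (k+1) hj hk1d).eq
    rw [hψdef]
    linear_combination (norm := noncomm_ring)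
      - hsj * (y k - y (k+1)) + s k * hc1 - s k * hc2
  have hψsq : ψ * ψ = 1 - Δ * Δ + s k * (e k * Δ) + s k * (e k * Δ) := by
    rw [hψdef, hΔdef]
    linear_combination (norm := noncomm_ring)
      s k * (hvw7' k hk) * (y k - y (k+1)) + s k * (hvw7 k hk) * (y k - y (k+1))
        - (hs2 k hk) * ((y k - y (k+1)) * (y k - y (k+1)))
  -- pointwise intertwining relations on eigenspaces
  have hrelA : ∀ (c : ℕ → ℂ), c k + c (k+1) ≠ 0 → ∀ x ∈ simGenEigenspace d y c,
      y k (ψ x) = ψ (y (k+1) x) := by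
    intro c hc x hx
    have h0 : (y k * ψ) x = (ψ * y (k+1) + e k * Δ) x := by rw [hψA]
    have hz : e k (Δ x) = 0 := hE0 c hc _ (hΔinv c x hx)
    simpa [Module.End.mul_apply, LinearMap.add_apply, hz] using h0
  have hrelB : ∀ (c : ℕ → ℂ), c k + c (k+1) ≠ 0 → ∀ x ∈ simGenEigenspace d y c,
      y (k+1) (ψ x) = ψ (y k x) := by
    intro c hc x hx
    have h0 : (y (k+1) * ψ) x = (ψ * y k - e k * Δ) x := by rw [hψB]
    have hz : e k (Δ x) = 0 := hE0 c hc _ (hΔinv c x hx)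
    simpa [Module.End.mul_apply, LinearMap.sub_apply, hz] using h0
  have hreljj : ∀ j, j < d → j ≠ k → j ≠ k + 1 → ∀ x : M,
      y j (ψ x) = ψ (y j x) := by
    intro j hj h1 h2 x
    have h0 : (y j * ψ) x = (ψ * y j) x := by rw [hψj j hj h1 h2]
    simpa [Module.End.mul_apply] using h0
  -- the mapping property
  have hmap : ∀ (c : ℕ → ℂ), c k + c (k+1) ≠ 0 → ∀ x ∈ simGenEigenspace d y c,
      ψ x ∈ simGenEigenspace d y
        (fun j => if j = k then c (k+1) else if j = k + 1 then c k else c j) := by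
    intro c hc x hx
    rw [hmem]
    intro j
    by_cases hjk : (j : ℕ) = k
    · obtain ⟨n, hn⟩ := (hmem c x).mp hx ⟨k+1, hk1d⟩
      refine ⟨n, ?_⟩
      have := aux_intw (simGenEigenspace d y c) ψ (y k) (y (k+1)) (c (k+1))
        (fun z hz => hyinv c (k+1) hk1d z hz) (hrelA c hc) n x hx
      simp only [hjk, eq_self_iff_true, if_true]
      rw [this, hn, map_zero]
    · by_cases hjk1 : (j : ℕ) = k + 1
      · obtain ⟨n, hn⟩ := (hmem c x).mp hx ⟨k, hkd⟩
        refine ⟨n, ?_⟩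
        have := aux_intw (simGenEigenspace d y c) ψ (y (k+1)) (y k) (c k)
          (fun z hz => hyinv c k hkd z hz) (hrelB c hc) n x hx
        simp only [hjk1, if_neg (by omega : k + 1 ≠ k), eq_self_iff_true, if_true]
        rw [this, hn, map_zero]
      · obtain ⟨n, hn⟩ := (hmem c x).mp hx j
        refine ⟨n, ?_⟩
        have := aux_intw (simGenEigenspace d y c) ψ (y j) (y j) (c j)
          (fun z hz => hyinv c j j.2 z hz) (fun z _ => hreljj j j.2 hjk hjk1 z) n x hx
        simp only [if_neg hjk, if_neg hjk1]
        rw [this, hn, map_zero]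
  have hpart1 : Submodule.map ψ (simGenEigenspace d y ev) ≤ simGenEigenspace d y ev' := by
    rintro x ⟨m, hm, rfl⟩
    exact hmap ev hsum m hm
  refine ⟨hpart1, ?_⟩
  intro hδ
  have hc0 : (1 : ℂ) - (ev k - ev (k+1)) ^ 2 ≠ 0 := by
    intro h; exact hδ (by linear_combination -h)
  set T : Module.End ℂ M := (ev k - ev (k+1)) ^ 2 • 1 - Δ * Δ with hT
  have hTid : ((1 - (ev k - ev (k+1)) ^ 2) • (1 : Module.End ℂ M) + T) = 1 - Δ * Δ := by
    rw [hT, sub_smul, one_smul]; abel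
  have hψsq_pt : ∀ (c : ℕ → ℂ), c k + c (k+1) ≠ 0 → ∀ x ∈ simGenEigenspace d y c,
      ψ (ψ x) = x - Δ (Δ x) := by
    intro c hc x hx
    have h0 : (ψ * ψ) x = (1 - Δ * Δ + s k * (e k * Δ) + s k * (e k * Δ)) x := by rw [hψsq]
    have hz : e k (Δ x) = 0 := hE0 c hc _ (hΔinv c x hx)
    simpa [Module.End.mul_apply, LinearMap.add_apply, LinearMap.sub_apply, hz] using h0
  have hTnil : ∀ (a b : ℂ), (a - b) ^ 2 = (ev k - ev (k+1)) ^ 2 → ∀ (x : M) (n1 n2 : ℕ),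
      ((y k - a • 1) ^ n1) x = 0 → ((y (k+1) - b • 1) ^ n2) x = 0 →
      ∃ N, (T ^ N) x = 0 := by
    intro a b hab x n1 n2 h1 h2
    set U : Module.End ℂ M := y k - a • 1 with hU
    set V : Module.End ℂ M := -(y (k+1) - b • 1) with hV
    have hV2 : (V ^ n2) x = 0 := by
      rw [hV, neg_pow, Module.End.mul_apply, h2, map_zero]
    have hUV : Commute U V :=
      (((hcomm k (k+1) hkd hk1d).sub_right
        ((Commute.one_right (y k)).smul_right _)).sub_left
        ((Commute.one_left _).smul_left _)).neg_right
    have hN0 : ((U + V) ^ (n1 + n2)) x = 0 := aux_nilsum U V hUV n1 n2 x h1 hV2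
    have hUV' : U + V = Δ - (a - b) • 1 := by
      rw [hU, hV, hΔdef, sub_smul]; abel
    refine ⟨n1 + n2, ?_⟩
    have hfact : T = ((a - b) • 1 + Δ) * ((a - b) • 1 - Δ) := by
      rw [hT, ← aux_factor, hab]
    have hcAB : Commute ((a - b) • (1 : Module.End ℂ M) + Δ) ((a - b) • 1 - Δ) :=
      Commute.add_left (aux_central _ _)
        (((aux_central (a - b) Δ).symm).sub_right (Commute.refl Δ))
    rw [hfact, hcAB.mul_pow, Module.End.mul_apply]
    have hz : (((a - b) • (1 : Module.End ℂ M) - Δ) ^ (n1 + n2)) x = 0 := by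
      have hneg : (a - b) • (1 : Module.End ℂ M) - Δ = -(U + V) := by rw [hUV']; abel
      rw [hneg, neg_pow, Module.End.mul_apply, hN0, map_zero]
    rw [hz, map_zero]
  have he1 : ev' k = ev (k+1) := by simp [hev'def]
  have he2 : ev' (k+1) = ev k := by simp [hev'def, (by omega : k + 1 ≠ k)]
  have hTmem : ∀ x ∈ simGenEigenspace d y ev, ∃ N, (T ^ N) x = 0 := by
    intro x hx
    obtain ⟨n1, h1⟩ := (hmem ev x).mp hx ⟨k, hkd⟩
    obtain ⟨n2, h2⟩ := (hmem ev x).mp hx ⟨k+1, hk1d⟩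
    exact hTnil (ev k) (ev (k+1)) rfl x n1 n2 h1 h2
  have hTmem' : ∀ x ∈ simGenEigenspace d y ev', ∃ N, (T ^ N) x = 0 := by
    intro x hx
    obtain ⟨n1, h1⟩ := (hmem ev' x).mp hx ⟨k, hkd⟩
    obtain ⟨n2, h2⟩ := (hmem ev' x).mp hx ⟨k+1, hk1d⟩
    rw [show ((⟨k, hkd⟩ : Fin d) : ℕ) = k from rfl, he1] at h1
    rw [show ((⟨k+1, hk1d⟩ : Fin d) : ℕ) = k + 1 from rfl, he2] at h2
    exact hTnil (ev (k+1)) (ev k) (by ring) x n1 n2 h1 h2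
  have hTinv : ∀ (c : ℕ → ℂ), ∀ x ∈ simGenEigenspace d y c,
      T x ∈ simGenEigenspace d y c := by
    intro c x hx
    have : T x = (ev k - ev (k+1)) ^ 2 • x - Δ (Δ x) := by
      simp [hT, LinearMap.sub_apply, LinearMap.smul_apply, Module.End.one_apply,
        Module.End.mul_apply]
    rw [this]
    exact Submodule.sub_mem _ (Submodule.smul_mem _ _ hx) (hΔinv c _ (hΔinv c x hx))
  have hsum' : ev' k + ev' (k+1) ≠ 0 := by
    rw [he1, he2, add_comm]; exact hsum
  constructor
  · refine le_antisymm hpart1 ?_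
    intro w hw
    obtain ⟨N, hN⟩ := hTmem' w hw
    obtain ⟨u, hu, huu⟩ := aux_solve _ T (hTinv ev') _ hc0 N w hw hN
    rw [hTid] at huu
    have huw : ψ (ψ u) = w := by
      rw [hψsq_pt ev' hsum' u hu]
      simpa [LinearMap.sub_apply, Module.End.one_apply, Module.End.mul_apply] using huu
    have hswap : (fun j => if j = k then ev' (k+1) else if j = k + 1 then ev' k else ev' j)
        = ev := by
      funext j
      by_cases hjk : j = k
      · simp [hjk, he2]
      · by_cases hjk1 : j = k + 1
        · simp [hjk1, he1, (by omega : k + 1 ≠ k)]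
        · simp [hjk, hjk1, hev'def]
    have hmemu := hmap ev' hsum' u hu
    rw [hswap] at hmemu
    exact ⟨ψ u, hmemu, huw⟩
  · intro m hm h0
    obtain ⟨N, hN⟩ := hTmem m hm
    refine aux_inj T _ hc0 N m hN ?_
    rw [hTid]
    have hthis := hψsq_pt ev hsum m hm
    have hψm : ψ m = 0 := h0
    rw [hψm, map_zero] at hthis
    simp only [LinearMap.sub_apply, Module.End.one_apply, Module.End.mul_apply]
    exact hthis.symm
end

section
/- With notation as above, if 𝐢_k + 𝐢_{k+1} ≠ 0, |𝐢_k - 𝐢_{k+1}| ≠ 1, and c = 𝐢_k - 𝐢_{k+1}, then as an endomorphism of the generalized eigenspace M_𝐢, ψ_k² = 1 - c² - z for some nilpotent endomorphism z; in particular ψ_k² is invertible on M_𝐢 since c² ≠ 1. -/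
open Module Finset

private lemma powMaps {M : Type*} [AddCommGroup M] [Module ℂ M] (p : Submodule ℂ M)
    (f : Module.End ℂ M) (hf : ∀ m ∈ p, f m ∈ p) :
    ∀ n, ∀ m ∈ p, (f ^ n) m ∈ p := by
  intro n
  induction n with
  | zero => intro m hm; simpa using hm
  | succ n ih =>
      intro m hm
      rw [pow_succ, Module.End.mul_apply]
      exact ih (f m) (hf m hm)

private lemma nilAdd {M : Type*} [AddCommGroup M] [Module ℂ M] (p : Submodule ℂ M)
    (f g : Module.End ℂ M) (hfg : Commute f g) (F : ℕ)
    (hgp : ∀ m ∈ p, g m ∈ p)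
    (hf : ∀ m ∈ p, (f ^ F) m = 0) (hg : ∀ m ∈ p, (g ^ F) m = 0) :
    ∀ m ∈ p, ((f + g) ^ (2 * F)) m = 0 := by
  have hfF : ∀ j, F ≤ j → ∀ v ∈ p, (f ^ j) v = 0 := by
    intro j hj v hv
    rw [← Nat.sub_add_cancel hj, pow_add, Module.End.mul_apply, hf v hv, map_zero]
  have hgF : ∀ j, F ≤ j → ∀ v ∈ p, (g ^ j) v = 0 := by
    intro j hj v hv
    rw [← Nat.sub_add_cancel hj, pow_add, Module.End.mul_apply, hg v hv, map_zero]
  intro m hm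
  rw [hfg.add_pow, LinearMap.sum_apply]
  apply Finset.sum_eq_zero
  intro i hi
  rw [Finset.mem_range] at hi
  rw [Module.End.mul_apply, Module.End.mul_apply, Module.End.natCast_apply]
  have hv : ((2 * F).choose i) • m ∈ p := by
    rw [← Nat.cast_smul_eq_nsmul ℂ]
    exact p.smul_mem _ hm
  rcases le_or_gt F (2 * F - i) with h | h
  · rw [hgF _ h _ hv, map_zero]
  · exact hfF _ (by omega) _ (powMaps p g hgp _ _ hv)

private lemma nilSub {M : Type*} [AddCommGroup M] [Module ℂ M] (p : Submodule ℂ M)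
    (f g : Module.End ℂ M) (hfg : Commute f g) (F : ℕ)
    (hgp : ∀ m ∈ p, g m ∈ p)
    (hf : ∀ m ∈ p, (f ^ F) m = 0) (hg : ∀ m ∈ p, (g ^ F) m = 0) :
    ∀ m ∈ p, ((f - g) ^ (2 * F)) m = 0 := by
  intro m hm
  have h := nilAdd p f (-g) hfg.neg_right F
    (fun m hm => by simpa using p.neg_mem (hgp m hm)) hf
    (fun m hm => by rw [neg_pow, Module.End.mul_apply, hg m hm, map_zero]) m hm
  simpa [sub_eq_add_neg] using h

/-- With notation as in the VW-algebra setting, if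
`𝐢 k + 𝐢 (k+1) ≠ 0`, `(𝐢 k - 𝐢 (k+1))² ≠ 1` and `c = 𝐢 k - 𝐢 (k+1)`, then as an
endomorphism of the generalized eigenspace `M_𝐢`, `ψ_k² = 1 - c² - z` for some
nilpotent endomorphism `z`; in particular `ψ_k²` is invertible on `M_𝐢` since
`c² ≠ 1`. -/
theorem statement5 (M : Type*) [AddCommGroup M] [Module ℂ M] [FiniteDimensional ℂ M]
    (d : ℕ) (y e s : ℕ → Module.End ℂ M)
    (hcomm : ∀ j j', j < d → j' < d → Commute (y j) (y j'))
    (hs2 : ∀ k, k + 1 < d → s k * s k = 1)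
    (hsy : ∀ k j, k + 1 < d → j < d → j ≠ k → j ≠ k + 1 → s k * y j = y j * s k)
    (hvw7 : ∀ k, k + 1 < d → s k * y k - y (k+1) * s k = e k - 1)
    (hvw7' : ∀ k, k + 1 < d → y k * s k - s k * y (k+1) = e k - 1)
    (hrel1 : ∀ k, k + 1 < d → e k * (y k + y (k+1)) = 0)
    (hrel2 : ∀ k, k + 1 < d → (y k + y (k+1)) * e k = 0)
    (hdecomp : (⨆ c : ℕ → ℂ, simGenEigenspace d y c) = ⊤)
    (ev : ℕ → ℂ) (k : ℕ) (hk : k + 1 < d)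
    (hsum : ev k + ev (k+1) ≠ 0)
    (c : ℂ) (hc : c = ev k - ev (k+1)) (hc2 : c ^ 2 ≠ 1) :
    ∃ z : Module.End ℂ M,
      (∀ m ∈ simGenEigenspace d y ev,
        (((s k * (y k - y (k+1)) + 1) ^ 2 : Module.End ℂ M)) m = (1 - c ^ 2) • m - z m) ∧
      (∀ m ∈ simGenEigenspace d y ev, z m ∈ simGenEigenspace d y ev) ∧
      (∃ N : ℕ, ∀ m ∈ simGenEigenspace d y ev, (z ^ N) m = 0) ∧
      (∀ m ∈ simGenEigenspace d y ev,
        (((s k * (y k - y (k+1)) + 1) ^ 2 : Module.End ℂ M)) m = 0 → m = 0) ∧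
      (∀ m ∈ simGenEigenspace d y ev, ∃ m' ∈ simGenEigenspace d y ev,
        (((s k * (y k - y (k+1)) + 1) ^ 2 : Module.End ℂ M)) m' = m) := by
  classical
  set p := simGenEigenspace d y ev with hp
  set F := Module.finrank ℂ M with hF
  have hkd : k < d := by omega
  have hk1d : k + 1 < d := hk
  -- y j preserves p
  have hinv : ∀ j, j < d → ∀ m ∈ p, (y j) m ∈ p := by
    intro j hj m hm
    rw [hp, simGenEigenspace, Submodule.mem_iInf] at hm ⊢
    intro i
    exact Module.End.mapsTo_maxGenEigenspace_of_comm (hcomm i j i.2 hj) (ev i) (hm i)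
  -- uniform nilpotency of y j - ev j on p
  have hnil : ∀ j, j < d → ∀ m ∈ p, (((y j - ev j • 1) : Module.End ℂ M) ^ F) m = 0 := by
    intro j hj m hm
    have hm' : m ∈ (y j).maxGenEigenspace (ev j) := by
      rw [hp, simGenEigenspace, Submodule.mem_iInf] at hm
      exact hm ⟨j, hj⟩
    rw [Module.End.maxGenEigenspace_eq_genEigenspace_finrank] at hm'
    exact Module.End.mem_genEigenspace_nat.mp hm'
  set A : Module.End ℂ M := y k - ev k • 1 with hA
  set B : Module.End ℂ M := y (k+1) - ev (k+1) • 1 with hB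
  have hAp : ∀ m ∈ p, A m ∈ p := by
    intro m hm
    have : A m = (y k) m - ev k • m := by simp [hA, LinearMap.sub_apply]
    rw [this]
    exact p.sub_mem (hinv k hkd m hm) (p.smul_mem _ hm)
  have hBp : ∀ m ∈ p, B m ∈ p := by
    intro m hm
    have : B m = (y (k+1)) m - ev (k+1) • m := by simp [hB, LinearMap.sub_apply]
    rw [this]
    exact p.sub_mem (hinv (k+1) hk1d m hm) (p.smul_mem _ hm)
  have hAB : Commute A B := by
    have h1 : Commute (y k) (y (k+1)) := hcomm k (k+1) hkd hk1d
    simp only [hA, hB]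
    exact (h1.sub_right ((Commute.one_right (y k)).smul_right _)).sub_left
      (((Commute.one_left (y (k+1))).smul_left _).sub_right
        (((Commute.one_left (1:Module.End ℂ M)).smul_left _).smul_right _))
  have hAF : ∀ m ∈ p, (A ^ F) m = 0 := hnil k hkd
  have hBF : ∀ m ∈ p, (B ^ F) m = 0 := hnil (k+1) hk1d
  -- the sum operator W = Y - λ•1 is nilpotent on p
  set U : Module.End ℂ M := y k - y (k+1) with hU
  set Y : Module.End ℂ M := y k + y (k+1) with hY
  set lam : ℂ := ev k + ev (k+1) with hlam
  have hWsum : Y - lam • 1 = A + B := by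
    simp only [hU, hY, hlam, hA, hB, add_smul]; abel
  have hWnil : ∀ m ∈ p, (((Y - lam • 1) : Module.End ℂ M) ^ (2 * F)) m = 0 := by
    rw [hWsum]; exact nilAdd p A B hAB F hBp hAF hBF
  -- vanishing lemma: if g * Y = 0 then g kills p
  have hvanish : ∀ g : Module.End ℂ M, g * Y = 0 → ∀ m ∈ p, g m = 0 := by
    intro g hg m hm
    have hgW : ∀ n : ℕ, g * (Y - lam • 1) ^ n = ((-lam) ^ n) • g := by
      intro n
      induction n with
      | zero => simp
      | succ n ih =>
          rw [pow_succ, ← mul_assoc, ih, smul_mul_assoc, mul_sub, hg, zero_sub,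
            mul_smul_comm, mul_one, pow_succ, smul_neg, ← neg_smul, smul_smul]
          congr 1; ring
    have h0 : (g * (Y - lam • 1) ^ (2 * F)) m = 0 := by
      rw [Module.End.mul_apply, hWnil m hm, map_zero]
    rw [hgW, LinearMap.smul_apply] at h0
    have hne : ((-lam) ^ (2 * F)) ≠ 0 := pow_ne_zero _ (neg_ne_zero.mpr hsum)
    exact (smul_eq_zero.mp h0).resolve_left hne
  -- s commutes with Y
  have h1 : s k * y k = y (k+1) * s k + (e k - 1) := by
    have h := hvw7 k hk
    rw [sub_eq_iff_eq_add] at h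
    rw [h]; abel
  have h2 : s k * y (k+1) = y k * s k - (e k - 1) := by
    have h := hvw7' k hk
    rw [sub_eq_iff_eq_add] at h
    rw [eq_sub_iff_add_eq, h]; abel
  have hsY : s k * Y = Y * s k := by
    simp only [hY, mul_add, add_mul, h1, h2]; abel
  -- e kills p, e*s kills p
  have heY : e k * Y = 0 := hrel1 k hk
  have hesY : (e k * s k) * Y = 0 := by
    rw [mul_assoc, hsY, ← mul_assoc, heY, zero_mul]
  -- key algebraic identity
  have hsu : s k * U = -(U * s k) + ((e k - 1) + (e k - 1)) := by
    simp only [hU, mul_sub, sub_mul, h1, h2]; abel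
  have hss := hs2 k hk
  have hpsi : (s k * U + 1) ^ 2
      = 1 - U * U + (e k * (s k * U) + e k * (s k * U)) := by
    have expand : (s k * U + 1) ^ 2 = (s k * U) * (s k * U) + (s k * U + s k * U) + 1 := by
      noncomm_ring
    rw [expand]
    nth_rewrite 1 [hsu]
    have : (-(U * s k) + ((e k - 1) + (e k - 1))) * (s k * U)
        = -(U * (s k * s k) * U) + ((e k - 1) * (s k * U) + (e k - 1) * (s k * U)) := by
      noncomm_ring
    rw [this, hss]
    noncomm_ring
  -- pointwise identity on p
  have hUp : ∀ m ∈ p, U m ∈ p := by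
    intro m hm
    have : U m = (y k) m - (y (k+1)) m := by simp [hU, LinearMap.sub_apply]
    rw [this]
    exact p.sub_mem (hinv k hkd m hm) (hinv (k+1) hk1d m hm)
  have hpsi_pt : ∀ m ∈ p, ((s k * U + 1) ^ 2 : Module.End ℂ M) m = m - U (U m) := by
    intro m hm
    rw [hpsi]
    have hes : (e k * (s k * U)) m = 0 := by
      rw [show e k * (s k * U) = (e k * s k) * U from (mul_assoc _ _ _).symm, Module.End.mul_apply]
      exact hvanish (e k * s k) hesY (U m) (hUp m hm)
    simp [LinearMap.add_apply, LinearMap.sub_apply, Module.End.mul_apply, hes]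
  -- define z
  set z : Module.End ℂ M := U * U - (c ^ 2) • 1 with hz
  have hzpt : ∀ m : M, z m = U (U m) - c ^ 2 • m := by
    intro m; simp [hz, LinearMap.sub_apply, Module.End.mul_apply]
  have bullet1 : ∀ m ∈ p, ((s k * U + 1) ^ 2 : Module.End ℂ M) m = (1 - c ^ 2) • m - z m := by
    intro m hm
    rw [hpsi_pt m hm, hzpt, sub_smul, one_smul]
    abel
  have hzp : ∀ m ∈ p, z m ∈ p := by
    intro m hm
    rw [hzpt]
    exact p.sub_mem (hUp _ (hUp m hm)) (p.smul_mem _ hm)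
  -- z is nilpotent on p with exponent 2F
  have hfact : ∀ (u : Module.End ℂ M) (γ : ℂ),
      (u - γ • 1) * (u + γ • 1) = u * u - (γ ^ 2) • 1 := by
    intro u γ
    rw [sub_mul, mul_add, mul_add, mul_smul_comm, smul_mul_assoc, smul_mul_assoc,
      mul_one, one_mul, one_mul, smul_smul, ← pow_two, ← pow_two]
    abel
  have hUfact : z = (U - c • 1) * (U + c • 1) := by
    rw [hz, hfact U c]
  have hUmc : U - c • 1 = A - B := by
    simp only [hU, hA, hB, hc, sub_smul]; abel
  have hUpc : ∀ m ∈ p, (U + c • 1) m ∈ p := by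
    intro m hm
    have : (U + c • 1) m = U m + c • m := by simp [LinearMap.add_apply]
    rw [this]
    exact p.add_mem (hUp m hm) (p.smul_mem _ hm)
  have hUmcnil : ∀ m ∈ p, ((U - c • 1) ^ (2 * F)) m = 0 := by
    rw [hUmc]; exact nilSub p A B hAB F hBp hAF hBF
  have hznil : ∀ m ∈ p, (z ^ (2 * F)) m = 0 := by
    intro m hm
    have hc1 : Commute U (c • (1 : Module.End ℂ M)) := (Commute.one_right U).smul_right c
    have hcomm2 : Commute (U - c • 1) (U + c • 1) :=
      Commute.sub_left ((Commute.refl U).add_right hc1)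
        (Commute.add_right hc1.symm (Commute.refl _))
    rw [hUfact, hcomm2.mul_pow, Module.End.mul_apply]
    exact hUmcnil _ (powMaps p _ hUpc _ m hm)
  -- invertibility
  have hone : (1 : ℂ) - c ^ 2 ≠ 0 := sub_ne_zero.mpr (Ne.symm hc2)
  set α : ℂ := (1 - c ^ 2)⁻¹ with hα
  have hαmul : (1 - c ^ 2) * α = 1 := mul_inv_cancel₀ hone
  refine ⟨z, bullet1, hzp, ⟨2 * F, hznil⟩, ?_, ?_⟩
  · -- injectivity
    intro m hm h0
    rw [bullet1 m hm, sub_eq_zero] at h0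
    -- (1 - c^2) • m = z m   →  m = α • z m
    have hm0 : m = α • z m := by
      rw [← h0, smul_smul, hα, inv_mul_cancel₀ hone, one_smul]
    have hiter : ∀ n : ℕ, m = α ^ n • (z ^ n) m := by
      intro n
      induction n with
      | zero => simp
      | succ n ih =>
          have hzn : (z ^ n) m = α • (z ^ (n+1)) m := by
            conv_lhs => rw [hm0]
            rw [map_smul, ← Module.End.mul_apply, ← pow_succ]
          calc m = α ^ n • (z ^ n) m := ih
            _ = α ^ n • (α • (z ^ (n+1)) m) := by rw [hzn]
            _ = α ^ (n+1) • (z ^ (n+1)) m := by rw [smul_smul, ← pow_succ]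
    have := hiter (2 * F)
    rw [hznil m hm, smul_zero] at this
    exact this
  · -- surjectivity
    intro m hm
    set N := 2 * F with hN
    refine ⟨∑ j ∈ Finset.range N, α ^ (j+1) • (z ^ j) m, ?_, ?_⟩
    · apply Submodule.sum_mem
      intro j _
      exact p.smul_mem _ (powMaps p z hzp j m hm)
    · set m' := ∑ j ∈ Finset.range N, α ^ (j+1) • (z ^ j) m with hm'
      have hm'p : m' ∈ p := by
        apply Submodule.sum_mem
        intro j _
        exact p.smul_mem _ (powMaps p z hzp j m hm)
      rw [bullet1 m' hm'p, hm']
      rw [Finset.smul_sum, map_sum]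
      have hterm1 : ∀ j, (1 - c ^ 2) • (α ^ (j+1) • (z ^ j) m) = α ^ j • (z ^ j) m := by
        intro j
        rw [smul_smul, show α ^ (j+1) = α * α ^ j from pow_succ' α (j), ← mul_assoc,
          hαmul, one_mul]
      have hterm2 : ∀ j, z (α ^ (j+1) • (z ^ j) m) = α ^ (j+1) • (z ^ (j+1)) m := by
        intro j
        rw [map_smul, ← Module.End.mul_apply, ← pow_succ']
      simp_rw [hterm1, hterm2]
      rw [← Finset.sum_sub_distrib]
      rw [Finset.sum_range_sub' (fun j => α ^ j • (z ^ j) m) N]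
      simp [hznil m hm]
end
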